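/- Iterated half-averaging: for any finite set S ⊆ (F_q^n)^d where each point has nonzero first block coordinates in a t-dimensional subspace, there is a chain S = S₀ ⊇ S₁ ⊇ ... ⊇ S_d where at each step i a nonzero linear form fᵢ in t variables vanishes on at least a (q^{t-1}−1)/(q^t−1) fraction of S_{i-1}, so that |S_d| ≤ (1 − 1/q + (q−1)/(q(q^t−1)))^d |S|. -/

import Mathlib

open Classical Finset

section
variable {F : Type*} [Field F] [Fintype F]

noncomputable def dotMap {t : ℕ} (v : Fin t → F) : (Fin t → F) →ₗ[F] F where
  toFun l := ∑ m, l m * v m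
  map_add' x y := by simp [add_mul, Finset.sum_add_distrib]
  map_smul' c x := by simp [Finset.mul_sum, mul_assoc]

lemma dotMap_surjective {t : ℕ} {v : Fin t → F} (hv : v ≠ 0) :
    Function.Surjective (dotMap v) := by
  obtain ⟨j, hj⟩ : ∃ j, v j ≠ 0 := by
    by_contra h; push_neg at h; exact hv (funext h)
  intro c
  refine ⟨Pi.single j (c / v j), ?_⟩
  simp only [dotMap, LinearMap.coe_mk, AddHom.coe_mk]
  rw [Finset.sum_eq_single j]
  · rw [Pi.single_eq_same, div_mul_cancel₀ _ hj]
  · intro b _ hb; rw [Pi.single_eq_of_ne hb, zero_mul]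
  · intro h; exact absurd (Finset.mem_univ j) h

lemma card_dot_zero {t : ℕ} (ht : 0 < t) {v : Fin t → F} (hv : v ≠ 0) :
    (Finset.univ.filter fun l : Fin t → F => ∑ m, l m * v m = 0).card
      = Fintype.card F ^ (t - 1) := by
  classical
  have h1 : (Finset.univ.filter fun l : Fin t → F => ∑ m, l m * v m = 0).card
      = Fintype.card (LinearMap.ker (dotMap v)) := by
    rw [← Fintype.card_subtype]
    apply Fintype.card_congr
    exact Equiv.subtypeEquivRight (fun l => by simp [LinearMap.mem_ker, dotMap])
  rw [h1, Module.card_eq_pow_finrank (K := F)]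
  congr 1
  have hft := (dotMap v).finrank_range_add_finrank_ker
  rw [LinearMap.range_eq_top.mpr (dotMap_surjective hv), finrank_top,
    Module.finrank_self, Module.finrank_pi, Fintype.card_fin] at hft
  generalize Module.finrank F ↥(LinearMap.ker (dotMap v)) = r at hft ⊢
  clear h1 hv v
  omega

lemma card_dot_zero_ne {t : ℕ} (ht : 0 < t) {v : Fin t → F} (hv : v ≠ 0) :
    ((Finset.univ.filter fun l : Fin t → F => l ≠ 0).filter
        fun l => ∑ m, l m * v m = 0).card = Fintype.card F ^ (t - 1) - 1 := by
  classical
  have h : (Finset.univ.filter fun l : Fin t → F => l ≠ 0).filter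
        (fun l => ∑ m, l m * v m = 0)
      = ((Finset.univ.filter fun l : Fin t → F => ∑ m, l m * v m = 0).erase 0) := by
    ext l
    simp only [Finset.mem_filter, Finset.mem_univ, true_and, Finset.mem_erase, and_comm]
  rw [h, Finset.card_erase_of_mem, card_dot_zero ht hv]
  simp

lemma exists_good_lam {t : ℕ} (ht : 0 < t) {α : Type*} (T : Finset α) (g : α → Fin t → F)
    (hg : ∀ a ∈ T, g a ≠ 0) :
    ∃ lamb : Fin t → F, lamb ≠ 0 ∧
      ((Fintype.card F : ℝ) ^ (t - 1) - 1) / ((Fintype.card F : ℝ) ^ t - 1) * T.card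
        ≤ ((T.filter fun a => ∑ m, lamb m * g a m = 0).card : ℝ) := by
  classical
  have hq : 1 < Fintype.card F := Fintype.one_lt_card
  have hq0 : 0 < Fintype.card F := zero_lt_one.trans hq
  set q := Fintype.card F with hqdef
  set N : Finset (Fin t → F) := Finset.univ.filter (fun l => l ≠ 0) with hN
  have hNcard : N.card = q ^ t - 1 := by
    rw [hN, Finset.filter_ne', Finset.card_erase_of_mem (Finset.mem_univ _),
      Finset.card_univ, Fintype.card_fun, Fintype.card_fin]
  have hsum : ∑ l ∈ N, (T.filter fun a => ∑ m, l m * g a m = 0).card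
      = T.card * (q ^ (t - 1) - 1) :=
    calc ∑ l ∈ N, (T.filter fun a => ∑ m, l m * g a m = 0).card
        = ∑ l ∈ N, ∑ a ∈ T, if (∑ m, l m * g a m = 0) then 1 else 0 :=
          Finset.sum_congr rfl fun l _ => Finset.card_filter _ _
      _ = ∑ a ∈ T, ∑ l ∈ N, if (∑ m, l m * g a m = 0) then 1 else 0 := Finset.sum_comm
      _ = ∑ _a ∈ T, (q ^ (t - 1) - 1) := Finset.sum_congr rfl fun a ha => by
          rw [← Finset.card_filter]; exact card_dot_zero_ne ht (hg a ha)
      _ = T.card * (q ^ (t - 1) - 1) := by rw [Finset.sum_const, smul_eq_mul]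
  have hNne : N.Nonempty := by
    refine ⟨Pi.single ⟨0, ht⟩ 1, ?_⟩
    simp only [hN, Finset.mem_filter, Finset.mem_univ, true_and]
    intro h
    have := congrFun h ⟨0, ht⟩
    simp at this
  obtain ⟨l, hlN, hl⟩ : ∃ l : Fin t → F, l ∈ N ∧ (q ^ (t - 1) - 1) * T.card
      ≤ N.card * (T.filter fun a => ∑ m, l m * g a m = 0).card := by
    by_contra hcon
    push_neg at hcon
    have hlt : ∑ l ∈ N, N.card * (T.filter fun a => ∑ m, l m * g a m = 0).card
        < ∑ _l ∈ N, (q ^ (t - 1) - 1) * T.card :=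
      Finset.sum_lt_sum_of_nonempty hNne (fun l hl => hcon l hl)
    rw [← Finset.mul_sum, hsum, Finset.sum_const, smul_eq_mul, mul_comm (#T)] at hlt
    rw [mul_left_comm] at hlt
    exact lt_irrefl _ hlt
  refine ⟨l, by simpa [hN] using hlN, ?_⟩
  rw [hNcard] at hl
  have hp1 : 1 ≤ q ^ (t - 1) := Nat.one_le_pow _ _ hq0
  have hp2 : 1 ≤ q ^ t := Nat.one_le_pow _ _ hq0
  have h1 : (1:ℝ) ≤ (q:ℝ) ^ (t-1) := by exact_mod_cast hp1
  have h2 : (1:ℝ) < (q:ℝ) ^ t := by exact_mod_cast Nat.one_lt_pow ht.ne' hq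
  rw [div_mul_eq_mul_div, div_le_iff₀ (by linarith)]
  calc ((q:ℝ) ^ (t-1) - 1) * T.card = (((q ^ (t-1) - 1 : ℕ) : ℝ)) * T.card := by
        rw [Nat.cast_sub hp1]; push_cast; ring
    _ ≤ (((q ^ t - 1 : ℕ) : ℝ)) * (T.filter fun a => ∑ m, l m * g a m = 0).card := by
        exact_mod_cast hl
    _ = ((T.filter fun a => ∑ m, l m * g a m = 0).card : ℝ) * ((q:ℝ) ^ t - 1) := by
        rw [Nat.cast_sub hp2]; push_cast; ring

noncomputable def pickLam {t d : ℕ} (ht : 0 < t)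
    (i : Fin d) (T : Finset (Fin d → Fin t → F)) : Fin t → F :=
  if h : ∀ a ∈ T, a i ≠ 0 then (exists_good_lam ht T (fun a => a i) h).choose
  else Pi.single ⟨0, ht⟩ 1

noncomputable def chain {t d : ℕ} (ht : 0 < t) (S : Finset (Fin d → Fin t → F)) :
    ℕ → Finset (Fin d → Fin t → F)
  | 0 => S
  | n + 1 =>
    if h : n < d then
      (chain ht S n).filter
        (fun a => (∑ mm : Fin t, pickLam ht ⟨n, h⟩ (chain ht S n) mm * a ⟨n, h⟩ mm) ≠ 0)
    else chain ht S n

lemma chain_subset {t d : ℕ} (ht : 0 < t) (S : Finset (Fin d → Fin t → F)) :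
    ∀ n, chain ht S n ⊆ S
  | 0 => subset_rfl
  | n + 1 => by
    rw [chain]
    split
    · exact (Finset.filter_subset _ _).trans (chain_subset ht S n)
    · exact chain_subset ht S n

lemma ratio_eq (x : ℝ) (hx : 2 ≤ x) (s : ℕ) :
    1 - (x ^ s - 1) / (x ^ (s + 1) - 1)
      = 1 - 1 / x + (x - 1) / (x * (x ^ (s + 1) - 1)) := by
  have hx0 : x ≠ 0 := by linarith
  have hxp : (1:ℝ) < x ^ (s+1) := one_lt_pow₀ (by linarith) (Nat.succ_ne_zero s)
  have h1 : x ^ (s+1) - 1 ≠ 0 := by linarith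
  field_simp
  ring

end


open Classical in
/-- Iterated half-averaging: for any finite set `S ⊆ (F_q^t)^d` of `d`-tuples of nonzero
vectors, there is a chain `S = S₀ ⊇ S₁ ⊇ ⋯ ⊇ S_d` where at each step `i` a nonzero
linear form `λᵢ` in `t` variables vanishes on at least a `(q^{t-1}−1)/(q^t−1)` fraction
of `S_{i-1}` and `Sᵢ` consists of the points of `S_{i-1}` where `λᵢ` does not vanish,
so that `|S_d| ≤ (1 − 1/q + (q−1)/(q(q^t−1)))^d · |S|`. -/
theorem iterated_half_averaging {F : Type*} [Field F] [Fintype F] (t d : ℕ) (ht : 0 < t)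
    (S : Finset (Fin d → Fin t → F)) (hS : ∀ a ∈ S, ∀ i, a i ≠ 0) :
    ∃ C : Fin (d + 1) → Finset (Fin d → Fin t → F), ∃ lam : Fin d → Fin t → F,
      C 0 = S ∧ (∀ i, lam i ≠ 0) ∧
      (∀ i : Fin d, C i.succ =
        (C i.castSucc).filter fun a => (∑ mm : Fin t, lam i mm * a i mm) ≠ 0) ∧
      (∀ i : Fin d,
        (((Fintype.card F : ℝ) ^ (t - 1) - 1) / ((Fintype.card F : ℝ) ^ t - 1)) *
            ((C i.castSucc).card : ℝ) ≤
          (((C i.castSucc).filter fun a =>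
              (∑ mm : Fin t, lam i mm * a i mm) = 0).card : ℝ)) ∧
      ((C (Fin.last d)).card : ℝ) ≤
        (1 - 1 / (Fintype.card F : ℝ) +
            ((Fintype.card F : ℝ) - 1) /
              ((Fintype.card F : ℝ) * ((Fintype.card F : ℝ) ^ t - 1))) ^ d * (S.card : ℝ) := by
  classical
  have hq : 1 < Fintype.card F := Fintype.one_lt_card
  set x : ℝ := (Fintype.card F : ℝ) with hx
  have hx2 : (2:ℝ) ≤ x := by have h2 : 2 ≤ Fintype.card F := hq; rw [hx]; exact_mod_cast h2
  have hgood : ∀ i : Fin d, ∀ a ∈ chain ht S i.val, a i ≠ 0 :=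
    fun i a ha => hS a (chain_subset ht S i.val ha) i
  have hpick : ∀ i : Fin d, pickLam ht i (chain ht S i.val)
      = (exists_good_lam ht (chain ht S i.val) (fun a => a i) (hgood i)).choose := by
    intro i
    rw [pickLam, dif_pos (hgood i)]
  refine ⟨fun i => chain ht S i.val, fun i => pickLam ht i (chain ht S i.val),
    ?_, ?_, ?_, ?_, ?_⟩
  · rfl
  · intro i
    dsimp only
    rw [hpick i]
    exact (exists_good_lam ht (chain ht S i.val) (fun a => a i) (hgood i)).choose_spec.1
  · intro i
    dsimp only [Fin.coe_castSucc, Fin.val_succ]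
    rw [chain, dif_pos i.isLt]
  · intro i
    dsimp only [Fin.coe_castSucc]
    have hfrac := (exists_good_lam ht (chain ht S i.val) (fun a => a i) (hgood i)).choose_spec.2
    rw [← hpick i] at hfrac
    convert hfrac
  · dsimp only [Fin.val_last]
    set r : ℝ := 1 - 1 / x + (x - 1) / (x * (x ^ t - 1)) with hr
    have hxt : (1:ℝ) < x ^ t := one_lt_pow₀ (by linarith) ht.ne'
    have hr0 : 0 ≤ r := by
      have h1 : (1:ℝ)/x ≤ 1 := by
        rw [div_le_one (by linarith)]; linarith
      have h2 : (0:ℝ) ≤ (x - 1) / (x * (x ^ t - 1)) :=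
        div_nonneg (by linarith) (by nlinarith)
      rw [hr]; linarith
    have hrval : 1 - (x ^ (t-1) - 1) / (x ^ t - 1) = r := by
      obtain ⟨s, rfl⟩ : ∃ s, t = s + 1 := ⟨t - 1, (Nat.succ_pred_eq_of_pos ht).symm⟩
      rw [hr]
      simpa using ratio_eq x hx2 s
    have key : ∀ n, n < d → ((chain ht S (n+1)).card : ℝ) ≤ r * ((chain ht S n).card : ℝ) := by
      intro n hn
      set i : Fin d := ⟨n, hn⟩ with hi
      have hfrac := (exists_good_lam ht (chain ht S i.val) (fun a => a i) (hgood i)).choose_spec.2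
      rw [← hpick i] at hfrac
      have hsplit := Finset.card_filter_add_card_filter_not
        (s := chain ht S n)
        (p := fun a => (∑ mm : Fin t, pickLam ht i (chain ht S n) mm * a i mm) = 0)
      have hchain : chain ht S (n+1) = (chain ht S n).filter
          (fun a => ¬ (∑ mm : Fin t, pickLam ht i (chain ht S n) mm * a i mm) = 0) := by
        rw [chain, dif_pos hn]
      rw [hchain]
      have hTcard : ((chain ht S n).card : ℝ)
          = (((chain ht S n).filter
              (fun a => (∑ mm : Fin t, pickLam ht i (chain ht S n) mm * a i mm) = 0)).card : ℝ)
            + (((chain ht S n).filter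
              (fun a => ¬ (∑ mm : Fin t, pickLam ht i (chain ht S n) mm * a i mm) = 0)).card : ℝ) := by
        exact_mod_cast hsplit.symm
      have hub : ((x ^ (t-1) - 1) / (x ^ t - 1)) * ((chain ht S n).card : ℝ)
          ≤ (((chain ht S n).filter
              (fun a => (∑ mm : Fin t, pickLam ht i (chain ht S n) mm * a i mm) = 0)).card : ℝ) :=
        hfrac
      rw [← hrval]
      nlinarith [hTcard, hub]
    have main : ∀ n, n ≤ d → ((chain ht S n).card : ℝ) ≤ r ^ n * (S.card : ℝ) := by
      intro n
      induction n with
      | zero => intro _; simp [chain]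
      | succ n ih =>
        intro hnd
        have hn : n < d := hnd
        calc ((chain ht S (n+1)).card : ℝ) ≤ r * ((chain ht S n).card : ℝ) := key n hn
          _ ≤ r * (r ^ n * (S.card : ℝ)) :=
            mul_le_mul_of_nonneg_left (ih (le_of_lt hn)) hr0
          _ = r ^ (n+1) * (S.card : ℝ) := by ring
    exact main d le_rfl
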